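/- Let 𝒜 be an uncountable almost disjoint family such that for every X ∈ 𝓘⁺(𝒜) the set {a ∈ 𝒜 : a ∩ X is finite} is countable. Then Ψ(𝒜) is quasi-normal. -/

import Mathlib

open Set

namespace PsiSpace

/-- An (infinite) almost disjoint family of infinite subsets of ℕ. -/
def AlmostDisjoint (𝒜 : Set (Set ℕ)) : Prop :=
  𝒜.Infinite ∧ (∀ a ∈ 𝒜, a.Infinite) ∧
    ∀ a ∈ 𝒜, ∀ b ∈ 𝒜, a ≠ b → (a ∩ b).Finite

/-- A maximal almost disjoint family. -/
def MadFamily (𝒜 : Set (Set ℕ)) : Prop :=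
  AlmostDisjoint 𝒜 ∧ ∀ X : Set ℕ, X.Infinite → ∃ a ∈ 𝒜, (a ∩ X).Infinite

/-- 𝒜↾B = {a ∈ 𝒜 : a ∩ B infinite}. -/
def ADRestrict (𝒜 : Set (Set ℕ)) (B : Set ℕ) : Set (Set ℕ) :=
  {a | a ∈ 𝒜 ∧ (a ∩ B).Infinite}

/-- 𝒜 has true cardinality 𝔠. -/
def TrueCardContinuum (𝒜 : Set (Set ℕ)) : Prop :=
  ∀ B : Set ℕ, (ADRestrict 𝒜 B).Finite ∨ Cardinal.mk ↥(ADRestrict 𝒜 B) = Cardinal.continuum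

/-- The underlying set of the Mrówka–Isbell space Ψ(𝒜): ℕ together with the members of 𝒜. -/
def Psi (𝒜 : Set (Set ℕ)) : Type := ℕ ⊕ {a : Set ℕ // a ∈ 𝒜}

/-- The isolated point of Ψ(𝒜) corresponding to n ∈ ℕ. -/
def Psi.nat {𝒜 : Set (Set ℕ)} (n : ℕ) : Psi 𝒜 := Sum.inl n

/-- The point of Ψ(𝒜) corresponding to a ∈ 𝒜. -/
def Psi.pt {𝒜 : Set (Set ℕ)} (a : {a : Set ℕ // a ∈ 𝒜}) : Psi 𝒜 := Sum.inr a

/-- The Mrówka–Isbell topology: each n ∈ ℕ is isolated, and basic neighbourhoods of a ∈ 𝒜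
are {a} ∪ (a \ F) for F finite. Equivalently, U is open iff for every a ∈ 𝒜 with a ∈ U,
all but finitely many elements of a belong to U. -/
instance psiTop (𝒜 : Set (Set ℕ)) : TopologicalSpace (Psi 𝒜) where
  IsOpen U := ∀ a : {a : Set ℕ // a ∈ 𝒜}, Psi.pt a ∈ U →
    {n : ℕ | n ∈ a.1 ∧ Psi.nat n ∉ U}.Finite
  isOpen_univ := fun a _ => by
    convert Set.finite_empty using 1
    ext n
    simp [Set.mem_univ]
  isOpen_inter := fun U V hU hV a ha => by
    refine ((hU a ha.1).union (hV a ha.2)).subset ?_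
    rintro n ⟨hn, hnUV⟩
    by_cases h : Psi.nat n ∈ U
    · exact Or.inr ⟨hn, fun h' => hnUV ⟨h, h'⟩⟩
    · exact Or.inl ⟨hn, h⟩
  isOpen_sUnion := fun S hS a ha => by
    obtain ⟨U, hUS, haU⟩ := ha
    exact (hS U hUS a haU).subset fun n hn => ⟨hn.1, fun h => hn.2 ⟨U, hUS, h⟩⟩

/-- The copy of a set W ⊆ ℕ inside Ψ(𝒜). -/
def PsiNat (𝒜 : Set (Set ℕ)) (W : Set ℕ) : Set (Psi 𝒜) := {x | ∃ n ∈ W, x = Psi.nat n}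

/-- The copy of a subfamily 𝒞 ⊆ 𝒜 inside Ψ(𝒜). -/
def PsiSub (𝒜 𝒞 : Set (Set ℕ)) : Set (Psi 𝒜) :=
  {x | ∃ a : {a : Set ℕ // a ∈ 𝒜}, a.1 ∈ 𝒞 ∧ x = Psi.pt a}

/-- A and B are separated by disjoint open sets. -/
def SepOpen {X : Type*} [TopologicalSpace X] (A B : Set X) : Prop :=
  ∃ U V : Set X, IsOpen U ∧ IsOpen V ∧ A ⊆ U ∧ B ⊆ V ∧ Disjoint U V

/-- Regular closed (closed domain): A is the closure of its interior. -/
def RegClosed {X : Type*} [TopologicalSpace X] (A : Set X) : Prop :=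
  closure (interior A) = A

/-- π-closed: a finite intersection of regular closed sets. -/
def PiClosed {X : Type*} [TopologicalSpace X] (A : Set X) : Prop :=
  ∃ S : Finset (Set X), (∀ B ∈ S, RegClosed B) ∧ A = ⋂₀ ↑S

/-- A is an intersection of at most n regular closed sets. -/
def InterOfAtMost {X : Type*} [TopologicalSpace X] (n : ℕ) (A : Set X) : Prop :=
  ∃ S : Finset (Set X), S.card ≤ n ∧ (∀ B ∈ S, RegClosed B) ∧ A = ⋂₀ ↑S

/-- Almost-normal: disjoint closed + regular closed sets are separated. -/
def AlmostNormal (X : Type*) [TopologicalSpace X] : Prop :=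
  ∀ A B : Set X, IsClosed A → RegClosed B → Disjoint A B → SepOpen A B

/-- π-normal: disjoint closed + π-closed sets are separated. -/
def PiNormal (X : Type*) [TopologicalSpace X] : Prop :=
  ∀ A B : Set X, IsClosed A → PiClosed B → Disjoint A B → SepOpen A B

/-- Quasi-normal: disjoint π-closed sets are separated. -/
def QuasiNormal (X : Type*) [TopologicalSpace X] : Prop :=
  ∀ A B : Set X, PiClosed A → PiClosed B → Disjoint A B → SepOpen A B

/-- Mildly-normal: disjoint regular closed sets are separated. -/
def MildlyNormal (X : Type*) [TopologicalSpace X] : Prop :=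
  ∀ A B : Set X, RegClosed A → RegClosed B → Disjoint A B → SepOpen A B

/-- Partly-normal: disjoint regular closed + π-closed sets are separated. -/
def PartlyNormal (X : Type*) [TopologicalSpace X] : Prop :=
  ∀ A B : Set X, RegClosed A → PiClosed B → Disjoint A B → SepOpen A B

/-- n-partly-normal: disjoint regular closed + (intersection of at most n regular closed)
sets are separated. -/
def NPartlyNormal (n : ℕ) (X : Type*) [TopologicalSpace X] : Prop :=
  ∀ A B : Set X, RegClosed A → InterOfAtMost n B → Disjoint A B → SepOpen A B

/-- 𝓘⁺(𝒜): the sets B ⊆ ℕ with 𝒜↾B infinite. -/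
def IPlus (𝒜 : Set (Set ℕ)) : Set (Set ℕ) := {B | (ADRestrict 𝒜 B).Infinite}

/-- Completely separable almost disjoint family. -/
def CompletelySeparable (𝒜 : Set (Set ℕ)) : Prop :=
  ∀ B ∈ IPlus 𝒜, ∃ a ∈ 𝒜, a ⊆ B

/-- A Luzin family: it can be enumerated as ⟨a_α : α < ω₁⟩ so that for each α < ω₁ and
n ∈ ℕ, the set {β < α : a_α ∩ a_β ⊆ n} is finite. -/
def LuzinFamily (𝒜 : Set (Set ℕ)) : Prop :=
  ∃ a : Ordinal.{0} → Set ℕ,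
    (∀ α, α < (Cardinal.aleph 1).ord → a α ∈ 𝒜) ∧
    (∀ x ∈ 𝒜, ∃ α, α < (Cardinal.aleph 1).ord ∧ a α = x) ∧
    (∀ α, α < (Cardinal.aleph 1).ord → ∀ β, β < (Cardinal.aleph 1).ord → α ≠ β → a α ≠ a β) ∧
    ∀ α, α < (Cardinal.aleph 1).ord → ∀ n : ℕ,
      {β : Ordinal.{0} | β < α ∧ a α ∩ a β ⊆ Set.Iio n}.Finite

/-- Strongly ℵ₀-separated almost disjoint family. -/
def StronglyAleph0Separated (𝒜 : Set (Set ℕ)) : Prop :=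
  ∀ A B : Set (Set ℕ), A ⊆ 𝒜 → B ⊆ 𝒜 → A.Countable → A.Infinite →
    B.Countable → B.Infinite → Disjoint A B →
    ∃ X : Set ℕ,
      (∀ a ∈ 𝒜, (a \ X).Finite ∨ (a ∩ X).Finite) ∧
      (∀ a ∈ A, (a \ X).Finite) ∧
      (∀ a ∈ B, (a ∩ X).Finite)

section Aux

variable {𝒜 : Set (Set ℕ)}

lemma nat_ne_pt {n : ℕ} {a : {a : Set ℕ // a ∈ 𝒜}} : (Psi.nat n : Psi 𝒜) ≠ Psi.pt a :=
  fun h => Sum.inl_ne_inr h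

lemma nat_inj {n m : ℕ} (h : (Psi.nat n : Psi 𝒜) = Psi.nat m) : n = m :=
  Sum.inl_injective h

lemma pt_inj {a b : {a : Set ℕ // a ∈ 𝒜}} (h : (Psi.pt a : Psi 𝒜) = Psi.pt b) : a = b :=
  Sum.inr_injective h

lemma isOpen_iff' {U : Set (Psi 𝒜)} :
    IsOpen U ↔ ∀ a : {a : Set ℕ // a ∈ 𝒜}, Psi.pt a ∈ U →
      {n : ℕ | n ∈ a.1 ∧ Psi.nat n ∉ U}.Finite := Iff.rfl

lemma closed_trace {C : Set (Psi 𝒜)} (hC : IsClosed C) {a : {a : Set ℕ // a ∈ 𝒜}}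
    (ha : Psi.pt a ∉ C) : {n : ℕ | n ∈ a.1 ∧ Psi.nat n ∈ C}.Finite := by
  have h := (isOpen_iff'.mp hC.isOpen_compl) a ha
  refine h.subset ?_
  intro n hn
  exact ⟨hn.1, not_not_intro hn.2⟩

lemma sep_of_finite (had : AlmostDisjoint 𝒜) {P Q : Set (Psi 𝒜)}
    (hP : IsClosed P) (hQ : IsClosed Q) (hdis : Disjoint P Q)
    (hfin : {a : {a : Set ℕ // a ∈ 𝒜} | Psi.pt a ∈ P}.Finite) :
    SepOpen P Q := by
  classical
  have hd : ∀ x, x ∈ P → x ∈ Q → False := fun x hx hy => Set.disjoint_left.mp hdis hx hy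
  set U : Set (Psi 𝒜) :=
    {x | (∃ n : ℕ, x = Psi.nat n ∧ x ∈ P) ∨
      ∃ a : {a : Set ℕ // a ∈ 𝒜}, Psi.pt a ∈ P ∧
        (x = Psi.pt a ∨ ∃ n ∈ a.1, x = Psi.nat n ∧ (Psi.nat n : Psi 𝒜) ∉ Q)} with hU
  set V : Set (Psi 𝒜) :=
    {x | (∃ n : ℕ, x = Psi.nat n ∧ x ∈ Q) ∨
      ∃ b : {a : Set ℕ // a ∈ 𝒜}, Psi.pt b ∈ Q ∧
        (x = Psi.pt b ∨ ∃ n ∈ b.1, x = Psi.nat n ∧ (Psi.nat n : Psi 𝒜) ∉ U)} with hV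
  -- point membership for U
  have hUpt : ∀ a : {a : Set ℕ // a ∈ 𝒜}, Psi.pt a ∈ U → Psi.pt a ∈ P := by
    intro a ha
    rcases ha with ⟨n, hn, _⟩ | ⟨b, hbP, hb | ⟨n, _, hn, _⟩⟩
    · exact absurd hn.symm nat_ne_pt
    · rw [show (Psi.pt a : Psi 𝒜) = Psi.pt b from hb]; exact hbP
    · exact absurd hn.symm nat_ne_pt
  have hVpt : ∀ b : {a : Set ℕ // a ∈ 𝒜}, Psi.pt b ∈ V → Psi.pt b ∈ Q := by
    intro a ha
    rcases ha with ⟨n, hn, _⟩ | ⟨b, hbQ, hb | ⟨n, _, hn, _⟩⟩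
    · exact absurd hn.symm nat_ne_pt
    · rw [show (Psi.pt a : Psi 𝒜) = Psi.pt b from hb]; exact hbQ
    · exact absurd hn.symm nat_ne_pt
  have hUnat : ∀ n : ℕ, (Psi.nat n : Psi 𝒜) ∈ U →
      ((Psi.nat n : Psi 𝒜) ∈ P ∨ ∃ a : {a : Set ℕ // a ∈ 𝒜},
        Psi.pt a ∈ P ∧ n ∈ a.1 ∧ (Psi.nat n : Psi 𝒜) ∉ Q) := by
    intro n hn
    rcases hn with ⟨m, hm, hmP⟩ | ⟨a, haP, ha | ⟨m, hma, hm, hmQ⟩⟩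
    · exact Or.inl hmP
    · exact absurd ha nat_ne_pt
    · rcases nat_inj hm with rfl
      exact Or.inr ⟨a, haP, hma, hmQ⟩
  refine ⟨U, V, ?_, ?_, ?_, ?_, ?_⟩
  · -- U open
    rw [isOpen_iff']
    intro a haU
    have haP := hUpt a haU
    have haQ : Psi.pt a ∉ Q := fun hq => hd _ haP hq
    refine (closed_trace hQ haQ).subset ?_
    intro n hn
    refine ⟨hn.1, by_contra fun hq => hn.2 ?_⟩
    exact Or.inr ⟨a, haP, Or.inr ⟨n, hn.1, rfl, hq⟩⟩
  · -- V open
    rw [isOpen_iff']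
    intro b hbV
    have hbQ := hVpt b hbV
    have hbP : Psi.pt b ∉ P := fun hp => hd _ hp hbQ
    have key : {n : ℕ | n ∈ b.1 ∧ Psi.nat n ∉ V} ⊆
        {n : ℕ | n ∈ b.1 ∧ (Psi.nat n : Psi 𝒜) ∈ P} ∪
          ⋃ a ∈ {a : {a : Set ℕ // a ∈ 𝒜} | Psi.pt a ∈ P}, (b.1 ∩ a.1) := by
      intro n hn
      have hnU : (Psi.nat n : Psi 𝒜) ∈ U := by
        by_contra hnu
        exact hn.2 (Or.inr ⟨b, hbQ, Or.inr ⟨n, hn.1, rfl, hnu⟩⟩)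
      rcases hUnat n hnU with hP' | ⟨a, haP, hna, _⟩
      · exact Or.inl ⟨hn.1, hP'⟩
      · exact Or.inr (Set.mem_biUnion haP ⟨hn.1, hna⟩)
    refine (Set.Finite.union (closed_trace hP hbP) ?_).subset key
    refine hfin.biUnion ?_
    intro a haP
    have hne : b.1 ≠ a.1 := by
      intro he
      exact hd _ haP (by rw [show a = b from Subtype.ext he.symm]; exact hbQ)
    exact (had.2.2 b.1 b.2 a.1 a.2 hne)
  · -- P ⊆ U
    intro x hx
    cases x with
    | inl n => exact Or.inl ⟨n, rfl, hx⟩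
    | inr a => exact Or.inr ⟨a, hx, Or.inl rfl⟩
  · -- Q ⊆ V
    intro x hx
    cases x with
    | inl n => exact Or.inl ⟨n, rfl, hx⟩
    | inr a => exact Or.inr ⟨a, hx, Or.inl rfl⟩
  · -- disjoint
    rw [Set.disjoint_left]
    intro x hxU hxV
    cases x with
    | inl n =>
      rcases hxV with ⟨m, _, hmQ⟩ | ⟨b, hbQ, hb | ⟨m, _, hm, hmU⟩⟩
      · rcases hUnat n hxU with hP' | ⟨a, _, _, hnQ⟩
        · exact hd _ hP' hmQ
        · exact hnQ hmQ
      · exact nat_ne_pt hb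
      · rcases nat_inj hm with rfl
        exact hmU hxU
    | inr a =>
      exact hd _ (hUpt a hxU) (hVpt a hxV)

lemma isOpen_singleton_nat (n : ℕ) : IsOpen ({Psi.nat n} : Set (Psi 𝒜)) := by
  rw [isOpen_iff']
  intro a ha
  exact absurd (Set.mem_singleton_iff.mp ha) (fun he => nat_ne_pt he.symm)

lemma nat_mem_of_mem_closure {S : Set (Psi 𝒜)} {n : ℕ}
    (h : (Psi.nat n : Psi 𝒜) ∈ closure S) : (Psi.nat n : Psi 𝒜) ∈ S := by
  rcases mem_closure_iff.mp h _ (isOpen_singleton_nat n) rfl with ⟨y, hy1, hy2⟩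
  rwa [Set.mem_singleton_iff.mp hy1] at hy2

lemma regClosed_pt_mem (had : AlmostDisjoint 𝒜) {R : Set (Psi 𝒜)} (hR : RegClosed R)
    (a : {a : Set ℕ // a ∈ 𝒜}) :
    Psi.pt a ∈ R ↔ (a.1 ∩ {n : ℕ | (Psi.nat n : Psi 𝒜) ∈ R}).Infinite := by
  constructor
  · intro haR
    by_contra hnotinf
    rw [Set.not_infinite] at hnotinf
    by_cases hint : Psi.pt a ∈ interior R
    · have hfin := (isOpen_iff'.mp isOpen_interior) a hint
      have hafin : a.1.Finite := by
        refine (hfin.union hnotinf).subset ?_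
        intro n hna
        by_cases hn : (Psi.nat n : Psi 𝒜) ∈ interior R
        · exact Or.inr ⟨hna, show (Psi.nat n : Psi 𝒜) ∈ R from interior_subset hn⟩
        · exact Or.inl ⟨hna, hn⟩
      exact (had.2.1 a.1 a.2) hafin
    · set O : Set (Psi 𝒜) :=
        insert (Psi.pt a) {x | ∃ n ∈ a.1, x = Psi.nat n ∧ (Psi.nat n : Psi 𝒜) ∉ R} with hodef
      have hOopen : IsOpen O := by
        rw [isOpen_iff']
        intro b hb
        have hba : b = a := by
          rcases Set.mem_insert_iff.mp hb with hb' | ⟨n, _, hn, _⟩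
          · exact pt_inj hb'
          · exact absurd hn.symm nat_ne_pt
        subst hba
        refine hnotinf.subset ?_
        intro n hn
        refine ⟨hn.1, ?_⟩
        by_contra hnR
        exact hn.2 (Set.mem_insert_iff.mpr (Or.inr ⟨n, hn.1, rfl, hnR⟩))
      have haO : Psi.pt a ∈ O := Set.mem_insert _ _
      have hclo : Psi.pt a ∈ closure (interior R) := by rw [hR]; exact haR
      obtain ⟨y, hyO, hyint⟩ := mem_closure_iff.mp hclo _ hOopen haO
      rcases Set.mem_insert_iff.mp hyO with hy | ⟨n, _, hy, hnR⟩
      · exact hint (hy ▸ hyint)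
      · exact hnR (interior_subset (hy ▸ hyint))
  · intro hinf
    rw [← hR]
    rw [mem_closure_iff]
    intro O hO haO
    have hfin := (isOpen_iff'.mp hO) a haO
    obtain ⟨n, ⟨hna, hnR⟩, hn2⟩ := (hinf.diff hfin).nonempty
    have hnO : (Psi.nat n : Psi 𝒜) ∈ O := by
      by_contra hno
      exact hn2 ⟨hna, hno⟩
    have hnint : (Psi.nat n : Psi 𝒜) ∈ interior R :=
      nat_mem_of_mem_closure (by rw [hR]; exact hnR)
    exact ⟨Psi.nat n, hnO, hnint⟩

lemma piClosed_isClosed {P : Set (Psi 𝒜)} (hP : PiClosed P) : IsClosed P := by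
  obtain ⟨S, hreg, hPe⟩ := hP
  subst hPe
  exact isClosed_sInter (fun R hR => (hreg R hR) ▸ isClosed_closure)

lemma piClosed_dichot (had : AlmostDisjoint 𝒜)
    (h : ∀ X ∈ IPlus 𝒜, {a : Set ℕ | a ∈ 𝒜 ∧ (a ∩ X).Finite}.Countable)
    {P : Set (Psi 𝒜)} (hP : PiClosed P) :
    {a : {a : Set ℕ // a ∈ 𝒜} | Psi.pt a ∈ P}.Finite ∨
      ({a : {a : Set ℕ // a ∈ 𝒜} | Psi.pt a ∈ P}ᶜ).Countable := by
  classical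
  obtain ⟨S, hreg, hPe⟩ := hP
  subst hPe
  by_cases hex : ∃ R ∈ S, {a : {a : Set ℕ // a ∈ 𝒜} | Psi.pt a ∈ R}.Finite
  · obtain ⟨R, hRS, hRfin⟩ := hex
    left
    refine hRfin.subset ?_
    intro a ha
    exact ha R hRS
  · right
    push_neg at hex
    have hcnt : ∀ R ∈ S, ({a : {a : Set ℕ // a ∈ 𝒜} | Psi.pt a ∈ R}ᶜ).Countable := by
      intro R hRS
      have hRreg := hreg R hRS
      set X : Set ℕ := {n : ℕ | (Psi.nat n : Psi 𝒜) ∈ R} with hX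
      have hchar : ∀ a : {a : Set ℕ // a ∈ 𝒜}, Psi.pt a ∈ R ↔ (a.1 ∩ X).Infinite :=
        regClosed_pt_mem had hRreg
      have hXIp : X ∈ IPlus 𝒜 := by
        have hinf : {a : {a : Set ℕ // a ∈ 𝒜} | Psi.pt a ∈ R}.Infinite :=
          hex R hRS
        have himg : (Subtype.val '' {a : {a : Set ℕ // a ∈ 𝒜} | Psi.pt a ∈ R}).Infinite :=
          hinf.image Subtype.val_injective.injOn
        refine himg.mono ?_
        rintro x ⟨a, haR, rfl⟩
        exact ⟨a.2, (hchar a).mp haR⟩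
      have := h X hXIp
      refine (this.preimage Subtype.val_injective).mono ?_
      intro a ha
      have : ¬ (a.1 ∩ X).Infinite := fun hi => ha ((hchar a).mpr hi)
      exact ⟨a.2, Set.not_infinite.mp this⟩
    have heq : ({a : {a : Set ℕ // a ∈ 𝒜} | Psi.pt a ∈ ⋂₀ ↑S}ᶜ) =
        ⋃ R ∈ (↑S : Set (Set (Psi 𝒜))), {a : {a : Set ℕ // a ∈ 𝒜} | Psi.pt a ∈ R}ᶜ := by
      ext a
      simp [Set.mem_sInter]
    rw [heq]
    exact Set.Countable.biUnion S.finite_toSet.countable hcnt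

end Aux

/-- if 𝒜 is an uncountable almost disjoint family such that for every
X ∈ 𝓘⁺(𝒜) the set {a ∈ 𝒜 : a ∩ X finite} is countable, then Ψ(𝒜) is quasi-normal. -/
theorem dichotomy_implies_quasiNormal (𝒜 : Set (Set ℕ)) (had : AlmostDisjoint 𝒜)
    (hunc : ¬ 𝒜.Countable)
    (h : ∀ X ∈ IPlus 𝒜, {a : Set ℕ | a ∈ 𝒜 ∧ (a ∩ X).Finite}.Countable) :
    QuasiNormal (Psi 𝒜) := by
  intro P Q hPpi hQpi hdis
  rcases piClosed_dichot had h hPpi with hfin | hco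
  · exact sep_of_finite had (piClosed_isClosed hPpi) (piClosed_isClosed hQpi) hdis hfin
  rcases piClosed_dichot had h hQpi with hfin | hco'
  · obtain ⟨U, V, hU, hV, hQU, hPV, hUV⟩ :=
      sep_of_finite had (piClosed_isClosed hQpi) (piClosed_isClosed hPpi) hdis.symm hfin
    exact ⟨V, U, hV, hU, hPV, hQU, hUV.symm⟩
  exfalso
  apply hunc
  have huniv : (Set.univ : Set {a : Set ℕ // a ∈ 𝒜}).Countable := by
    refine (hco.union hco').mono ?_
    intro a _
    by_cases ha : Psi.pt a ∈ P
    · exact Or.inr (fun hq => Set.disjoint_left.mp hdis ha hq)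
    · exact Or.inl ha
  have : Countable {a : Set ℕ // a ∈ 𝒜} := Set.countable_univ_iff.mp huniv
  exact Set.countable_coe_iff.mpr this

end PsiSpace
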